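/- If a graph G is m-fat (n+1)-bottlenecked but not coarsely n-bottlenecked, then for every M there exists an M-fat (n+1)-ladder in G; i.e., G contains D_{n+1} as an asymptotic minor. -/
import Mathlib


open SimpleGraph

variable {V : Type}

/-- A set of vertices is connected if the induced subgraph is connected. -/
def ConnSet (G : SimpleGraph V) (X : Set V) : Prop := (G.induce X).Connected

/-- `G` is `n`-edge bottlenecked: any two disjoint connected vertex sets `X,Y`
admit a set of at most `n` edges meeting every `X,Y` path. -/
def EdgeBottlenecked (G : SimpleGraph V) (n : ℕ) : Prop :=
  ∀ X Y : Set V, Disjoint X Y → ConnSet G X → ConnSet G Y →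
    ∃ S : Finset (Sym2 V), S.card ≤ n ∧
      ∀ ⦃x y : V⦄ (p : G.Walk x y), x ∈ X → y ∈ Y → p.IsPath → ∃ e ∈ S, e ∈ p.edges

/-- `G` is `n`-point bottlenecked: any two disjoint connected vertex sets `X,Y`
admit a set of at most `n` vertices meeting every `X,Y` path. -/
def PointBottlenecked (G : SimpleGraph V) (n : ℕ) : Prop :=
  ∀ X Y : Set V, Disjoint X Y → ConnSet G X → ConnSet G Y →
    ∃ S : Finset V, S.card ≤ n ∧
      ∀ ⦃x y : V⦄ (p : G.Walk x y), x ∈ X → y ∈ Y → p.IsPath → ∃ v ∈ S, v ∈ p.support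

/-- An `n`-ladder: two disjoint connected poles `X,Y` and `n` rungs, i.e. `X,Y`
paths that are pairwise disjoint outside of `X ∪ Y`. -/
structure Ladder (G : SimpleGraph V) (n : ℕ) where
  X : Set V
  Y : Set V
  disj : Disjoint X Y
  connX : ConnSet G X
  connY : ConnSet G Y
  a : Fin n → V
  b : Fin n → V
  ha : ∀ i, a i ∈ X
  hb : ∀ i, b i ∈ Y
  p : (i : Fin n) → G.Walk (a i) (b i)
  isPath : ∀ i, (p i).IsPath
  rungsDisj : ∀ i j, i ≠ j → ∀ v, v ∈ (p i).support → v ∈ (p j).support → v ∈ X ∪ Y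

/-- `G` contains the dipole `D_k` as a minor: equivalently, `G` contains a `k`-ladder. -/
def HasDipoleMinor (G : SimpleGraph V) (k : ℕ) : Prop := Nonempty (Ladder G k)

/-- Two vertex sets are `M`-disjoint if every pair of points (one from each) is at
graph distance at least `M`. -/
def MDisjoint (G : SimpleGraph V) (M : ℕ) (X Y : Set V) : Prop :=
  ∀ x ∈ X, ∀ y ∈ Y, M ≤ G.dist x y

/-- `G` is `M`-fat `n`-bottlenecked: any two connected `M`-disjoint sets `X,Y` admit
at most `n` vertices (outside `X ∪ Y`) whose open `M`-neighborhood meets every `X,Y` path. -/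
def FatBottlenecked (G : SimpleGraph V) (M n : ℕ) : Prop :=
  ∀ X Y : Set V, ConnSet G X → ConnSet G Y → MDisjoint G M X Y →
    ∃ S : Finset V, S.card ≤ n ∧ (∀ s ∈ S, s ∉ X ∪ Y) ∧
      ∀ ⦃x y : V⦄ (p : G.Walk x y), x ∈ X → y ∈ Y → p.IsPath →
        ∃ v ∈ p.support, ∃ s ∈ S, G.dist v s < M

/-- An `M`-fat `n`-ladder: an `n`-ladder whose poles are `M`-disjoint and whose
rungs are pairwise `M`-disjoint. -/
structure FatLadder (G : SimpleGraph V) (M n : ℕ) extends Ladder G n where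
  polesFat : MDisjoint G M X Y
  rungsFat : ∀ i j, i ≠ j → ∀ u v, u ∈ (p i).support → v ∈ (p j).support → M ≤ G.dist u v

/-- `H` is a minor of `G`: branch sets in `G` (nonempty, connected, pairwise disjoint)
realize the vertices of `H`, and every edge of `H` is realized by an edge of `G`. -/
def IsMinor {W : Type} (G : SimpleGraph V) (H : SimpleGraph W) : Prop :=
  ∃ B : W → Set V, (∀ w, (B w).Nonempty) ∧ (∀ w, ConnSet G (B w)) ∧
    (∀ w w', w ≠ w' → Disjoint (B w) (B w')) ∧
    (∀ ⦃w w'⦄, H.Adj w w' → ∃ u ∈ B w, ∃ v ∈ B w', G.Adj u v)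

/-- `H` is an `M`-fat minor of `G`: a minor whose branch sets are pairwise `M`-disjoint
except where incident (adjacent) in `H`. -/
def IsFatMinor (G : SimpleGraph V) (M : ℕ) {W : Type} (H : SimpleGraph W) : Prop :=
  ∃ B : W → Set V, (∀ w, (B w).Nonempty) ∧ (∀ w, ConnSet G (B w)) ∧
    (∀ w w', w ≠ w' → Disjoint (B w) (B w')) ∧
    (∀ w w', w ≠ w' → ¬ H.Adj w w' → MDisjoint G M (B w) (B w')) ∧
    (∀ ⦃w w'⦄, H.Adj w w' → ∃ u ∈ B w, ∃ v ∈ B w', G.Adj u v)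

namespace CMAux

variable {G : SimpleGraph V}

lemma dist_end_le_of_mem [DecidableEq V] {u v w : V} (p : G.Walk u v) (hw : w ∈ p.support) :
    G.dist w v ≤ p.length := by
  have h1 : G.dist w v ≤ (p.dropUntil w hw).length := SimpleGraph.dist_le _
  have h2 := congrArg Walk.length (p.take_spec hw)
  rw [Walk.length_append] at h2
  omega

lemma dist_start_le_of_mem [DecidableEq V] {u v w : V} (p : G.Walk u v) (hw : w ∈ p.support) :
    G.dist u w ≤ p.length := by
  have hw' : w ∈ p.reverse.support := by rw [Walk.support_reverse]; simpa using hw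
  have := dist_end_le_of_mem p.reverse hw'
  rw [Walk.length_reverse, SimpleGraph.dist_comm] at this
  exact this

lemma firstHit {Q : V → Prop} [DecidablePred Q] :
    ∀ {x y : V} (p : G.Walk x y), (∃ v ∈ p.support, Q v) →
    ∃ (T : V) (q : G.Walk x T) (r : G.Walk T y),
      p = q.append r ∧ Q T ∧ ∀ v ∈ q.support, v ≠ T → ¬ Q v := by
  intro x y p
  induction p with
  | nil =>
    intro h
    obtain ⟨v, hv, hQ⟩ := h
    simp only [Walk.support_nil, List.mem_singleton] at hv
    refine ⟨_, Walk.nil, Walk.nil, rfl, ?_, by simp⟩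
    rwa [hv] at hQ
  | @cons a c y h' p' ih =>
    intro hex
    by_cases hx : Q a
    · exact ⟨a, Walk.nil, Walk.cons h' p', rfl, hx, by simp⟩
    · have hex' : ∃ v ∈ p'.support, Q v := by
        obtain ⟨v, hv, hQ⟩ := hex
        rw [Walk.support_cons, List.mem_cons] at hv
        rcases hv with rfl | hv
        · exact absurd hQ hx
        · exact ⟨v, hv, hQ⟩
      obtain ⟨T, q, r, hpq, hQT, hcl⟩ := ih hex'
      refine ⟨T, Walk.cons h' q, r, ?_, hQT, ?_⟩
      · rw [Walk.cons_append, hpq]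
      · intro v hv hne
        rw [Walk.support_cons, List.mem_cons] at hv
        rcases hv with rfl | hv
        · exact hx
        · exact hcl v hv hne

lemma sideTrim (hG : G.Connected) {s₀ : V} {R : ℕ} :
    ∀ {x T : V} (q : G.Walk x T), q.IsPath → G.dist T s₀ < R →
    (∀ v ∈ q.support, v ≠ T → R ≤ G.dist v s₀) →
    ∃ (a : V) (w : G.Walk a x), G.dist a s₀ ≤ R ∧
      (∀ v ∈ w.support, v ∈ q.support) ∧
      ((∀ v ∈ w.support, R ≤ G.dist v s₀) ∨ (a = x ∧ ∀ v ∈ w.support, v = x)) := by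
  intro x T q
  cases q with
  | nil =>
    intro _ hT _
    exact ⟨x, Walk.nil, le_of_lt hT, by simp, Or.inr ⟨rfl, by simp⟩⟩
  | @cons a c T h p =>
    intro hq hT hclean
    have hnn : ¬ (Walk.cons h p).reverse.Nil := by
      rw [Walk.nil_iff_length_eq, Walk.length_reverse]
      simp
    obtain ⟨u, h₂, q₂, hrev⟩ := Walk.not_nil_iff.mp hnn
    have hsupp : (Walk.cons h p).reverse.support = T :: q₂.support := by
      rw [hrev, Walk.support_cons]
    have hsub : ∀ v ∈ q₂.support, v ∈ (Walk.cons h p).support := by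
      intro v hv
      have : v ∈ (Walk.cons h p).reverse.support := by
        rw [hsupp]; exact List.mem_cons_of_mem _ hv
      rw [Walk.support_reverse, List.mem_reverse] at this
      exact this
    have hTnot : T ∉ q₂.support := by
      have hnodup : ((Walk.cons h p).reverse.support).Nodup := (hq.reverse).2
      rw [hsupp] at hnodup
      exact (List.nodup_cons.mp hnodup).1
    have hclean2 : ∀ v ∈ q₂.support, R ≤ G.dist v s₀ := by
      intro v hv
      exact hclean v (hsub v hv) (fun hvT => hTnot (hvT ▸ hv))
    have hdistu : G.dist u s₀ ≤ R := by
      have h1 : G.dist u s₀ ≤ G.dist u T + G.dist T s₀ := hG.dist_triangle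
      have h2 : G.dist u T ≤ 1 := by
        have := SimpleGraph.dist_le (Walk.cons h₂.symm (Walk.nil : G.Walk T T))
        simpa using this
      omega
    exact ⟨u, q₂, hdistu, hsub, Or.inl hclean2⟩

lemma reachable_induce {st : Set V} :
    ∀ {u v : V} (p : G.Walk u v), (∀ w ∈ p.support, w ∈ st) →
    ∀ (hu : u ∈ st) (hv : v ∈ st), (G.induce st).Reachable ⟨u, hu⟩ ⟨v, hv⟩ := by
  intro u v p
  induction p with
  | nil => intro _ hu hv; rfl
  | @cons a c y h p ih =>
    intro hp hu hv
    have hc : c ∈ st := hp c (by rw [Walk.support_cons]; exact List.mem_cons_of_mem _ p.start_mem_support)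
    have hadj : (G.induce st).Adj ⟨a, hu⟩ ⟨c, hc⟩ := by
      simp only [SimpleGraph.induce, SimpleGraph.comap_adj]
      exact h
    exact (hadj.reachable).trans
      (ih (fun w hw => hp w (by rw [Walk.support_cons]; exact List.mem_cons_of_mem _ hw)) hc hv)

lemma walk_out {st : Set V} {u v : V} (hu : u ∈ st) (hv : v ∈ st)
    (h : (G.induce st).Reachable ⟨u, hu⟩ ⟨v, hv⟩) :
    ∃ p : G.Walk u v, ∀ w ∈ p.support, w ∈ st := by
  let f : G.induce st →g G := ⟨Subtype.val, fun {a b} hab => by simpa using hab⟩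
  obtain ⟨q⟩ := h
  refine ⟨q.map f, ?_⟩
  intro w hw
  rw [Walk.support_map] at hw
  obtain ⟨z, _, rfl⟩ := List.mem_map.mp hw
  exact z.2

def FatLadder.weaken {M k : ℕ} (L : FatLadder G (M+1) k) : FatLadder G M k where
  toLadder := L.toLadder
  polesFat := fun x hx y hy => le_trans (Nat.le_succ M) (L.polesFat x hx y hy)
  rungsFat := fun i j hij u v hu hv => le_trans (Nat.le_succ M) (L.rungsFat i j hij u v hu hv)

lemma main_aux (G : SimpleGraph V) (hG : G.Connected) (m n : ℕ)
    (h₁ : FatBottlenecked G m (n + 1)) (h₂ : ¬ ∃ M, FatBottlenecked G M n)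
    (M : ℕ) (hM1 : 1 ≤ M) : Nonempty (FatLadder G M (n + 1)) := by
  classical
  set R := M + m with hR
  set M' := 3*M + 3*m + 1 with hM'
  have hnot : ¬ FatBottlenecked G M' n := fun h => h₂ ⟨M', h⟩
  rw [FatBottlenecked] at hnot
  push_neg at hnot
  obtain ⟨X, Y, hXc, hYc, hXY, hbad⟩ := hnot
  have hm_le : m ≤ M' := by omega
  have hXYm : MDisjoint G m X Y := fun x hx y hy => le_trans hm_le (hXY x hx y hy)
  obtain ⟨S, hScard, hSout, hstar⟩ := h₁ X Y hXc hYc hXYm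
  have key : ∀ (x y : V) (W : G.Walk x y), x ∈ X → y ∈ Y →
      (∀ v ∈ W.support, ∀ t ∈ S, m ≤ G.dist v t) → False := by
    intro x y W hx hy hcl
    obtain ⟨v, hv, t, ht, hlt⟩ := hstar W.bypass hx hy (Walk.bypass_isPath W)
    exact absurd hlt (not_lt.2 (hcl v (Walk.support_bypass_subset W hv) t ht))
  have hcard : S.card = n + 1 := by
    rcases lt_or_ge S.card (n+1) with h | h
    · exfalso
      obtain ⟨x, y, p, hx, hy, hp, hcl⟩ := hbad S (by omega) hSout
      exact key x y p hx hy (fun v hv t ht => le_trans hm_le (hcl v hv t ht))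
    · omega
  set e := Finset.equivFinOfCardEq hcard with he
  set sv : Fin (n+1) → V := fun i => ((e.symm i : {x // x ∈ S}) : V) with hsv
  have hsv_mem : ∀ i, sv i ∈ S := fun i => (e.symm i).2
  have hsv_inj : ∀ i j, sv i = sv j → i = j := by
    intro i j hij
    have h : e.symm i = e.symm j := Subtype.ext hij
    simpa using congrArg e h
  have hsv_surj : ∀ t ∈ S, ∃ k, sv k = t := by
    intro t ht
    exact ⟨e ⟨t, ht⟩, by simp [hsv]⟩
  have spread : ∀ i j, i ≠ j → M + 2*R + 2 ≤ G.dist (sv i) (sv j) := by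
    intro i j hij
    by_contra hcon
    push_neg at hcon
    obtain ⟨x, y, p, hx, hy, hp, hcl⟩ := hbad (S.erase (sv j))
      (by rw [Finset.card_erase_of_mem (hsv_mem j), hcard]; omega)
      (fun t ht => hSout t (Finset.mem_of_mem_erase ht))
    apply key x y p hx hy
    intro v hv t ht
    obtain ⟨k, rfl⟩ := hsv_surj t ht
    by_cases hkj : k = j
    · subst hkj
      have h1 : M' ≤ G.dist v (sv i) := hcl v hv _
        (Finset.mem_erase.2 ⟨fun hh => hij (hsv_inj i k hh), hsv_mem i⟩)
      have h2 : G.dist v (sv i) ≤ G.dist v (sv k) + G.dist (sv k) (sv i) := hG.dist_triangle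
      have h3 : G.dist (sv k) (sv i) = G.dist (sv i) (sv k) := SimpleGraph.dist_comm
      omega
    · have := hcl v hv _ (Finset.mem_erase.2 ⟨fun hh => hkj (hsv_inj k j hh), hsv_mem k⟩)
      omega
  have hpaths : ∀ i : Fin (n+1), ∃ (x y : V) (p : G.Walk x y), x ∈ X ∧ y ∈ Y ∧ p.IsPath ∧
      ∀ v ∈ p.support, ∀ k, k ≠ i → M' ≤ G.dist v (sv k) := by
    intro i
    obtain ⟨x, y, p, hx, hy, hp, hcl⟩ := hbad (S.erase (sv i))
      (by rw [Finset.card_erase_of_mem (hsv_mem i), hcard]; omega)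
      (fun t ht => hSout t (Finset.mem_of_mem_erase ht))
    exact ⟨x, y, p, hx, hy, hp, fun v hv k hk =>
      hcl v hv _ (Finset.mem_erase.2 ⟨fun hh => hk (hsv_inj k i hh), hsv_mem k⟩)⟩
  choose xx yy P hPx hPy hPp hPcl using hpaths
  have build : ∀ i : Fin (n+1), ∃ (a b : V) (wa : G.Walk a (xx i)) (wb : G.Walk b (yy i))
      (rg : G.Walk a b),
      (∀ v ∈ wa.support, v ∈ (P i).support) ∧
      ((∀ v ∈ wa.support, R ≤ G.dist v (sv i)) ∨ (a = xx i ∧ ∀ v ∈ wa.support, v = xx i)) ∧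
      (∀ v ∈ wb.support, v ∈ (P i).support) ∧
      ((∀ v ∈ wb.support, R ≤ G.dist v (sv i)) ∨ (b = yy i ∧ ∀ v ∈ wb.support, v = yy i)) ∧
      rg.IsPath ∧ (∀ v ∈ rg.support, G.dist v (sv i) ≤ R) := by
    intro i
    have hclose : ∃ v ∈ (P i).support, G.dist v (sv i) < R := by
      obtain ⟨v, hv, t, ht, hlt⟩ := hstar (P i) (hPx i) (hPy i) (hPp i)
      obtain ⟨k, rfl⟩ := hsv_surj t ht
      by_cases hk : k = i
      · subst hk; exact ⟨v, hv, by omega⟩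
      · exact absurd hlt (not_lt.2 (le_trans hm_le (hPcl i v hv k hk)))
    obtain ⟨T, q, r, hdecomp, hQT, hclean⟩ :=
      firstHit (Q := fun v => G.dist v (sv i) < R) (P i) hclose
    have hqpath : q.IsPath := by
      rw [Walk.isPath_def]
      have hnd : (P i).support.Nodup := (hPp i).2
      rw [hdecomp, Walk.support_append] at hnd
      exact hnd.of_append_left
    have hqsub : ∀ v ∈ q.support, v ∈ (P i).support := by
      intro v hv
      rw [hdecomp, Walk.support_append]
      exact List.mem_append_left _ hv
    obtain ⟨a, wa, haR, hwsub, hwclean⟩ := sideTrim hG q hqpath hQT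
      (fun v hv hne => not_lt.1 (hclean v hv hne))
    have hrevmem : ∃ v ∈ (P i).reverse.support, G.dist v (sv i) < R := by
      obtain ⟨v, hv, h⟩ := hclose
      exact ⟨v, by rw [Walk.support_reverse, List.mem_reverse]; exact hv, h⟩
    obtain ⟨T', q', r', hdecomp', hQT', hclean'⟩ :=
      firstHit (Q := fun v => G.dist v (sv i) < R) (P i).reverse hrevmem
    have hq'path : q'.IsPath := by
      rw [Walk.isPath_def]
      have hnd : (P i).reverse.support.Nodup := ((hPp i).reverse).2
      rw [hdecomp', Walk.support_append] at hnd
      exact hnd.of_append_left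
    have hq'sub : ∀ v ∈ q'.support, v ∈ (P i).support := by
      intro v hv
      have h : v ∈ (P i).reverse.support := by
        rw [hdecomp', Walk.support_append]; exact List.mem_append_left _ hv
      rw [Walk.support_reverse, List.mem_reverse] at h; exact h
    obtain ⟨b, wb, hbR, hwsub', hwclean'⟩ := sideTrim hG q' hq'path hQT'
      (fun v hv hne => not_lt.1 (hclean' v hv hne))
    obtain ⟨g1, hg1⟩ := hG.exists_walk_length_eq_dist a (sv i)
    obtain ⟨g2, hg2⟩ := hG.exists_walk_length_eq_dist (sv i) b
    refine ⟨a, b, wa, wb, (g1.append g2).bypass,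
      (fun v hv => hqsub v (hwsub v hv)), hwclean,
      (fun v hv => hq'sub v (hwsub' v hv)), hwclean',
      Walk.bypass_isPath _, ?_⟩
    intro v hv
    have hv' := Walk.support_bypass_subset _ hv
    rw [Walk.support_append] at hv'
    rcases List.mem_append.mp hv' with h | h
    · have hle := dist_end_le_of_mem g1 h
      rw [hg1] at hle
      exact le_trans hle haR
    · have h2 : v ∈ g2.support := List.mem_of_mem_tail h
      have hle := dist_start_le_of_mem g2 h2
      rw [hg2] at hle
      have hc : G.dist v (sv i) = G.dist (sv i) v := SimpleGraph.dist_comm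
      have hb' : G.dist (sv i) b = G.dist b (sv i) := SimpleGraph.dist_comm
      omega
  choose A B wA wB rg hwAsub hwAclean hwBsub hwBclean hrgPath hrgBall using build
  set XS : Set V := X ∪ (⋃ i, {v | v ∈ (wA i).support}) with hXSdef
  set YS : Set V := Y ∪ (⋃ i, {v | v ∈ (wB i).support}) with hYSdef
  have hXSchar : ∀ v ∈ XS, v ∈ X ∨
      ∃ i, v ∈ (wA i).support ∧ ∀ u ∈ (wA i).support, R ≤ G.dist u (sv i) := by
    intro v hv
    rw [hXSdef, Set.mem_union] at hv
    rcases hv with hv | hv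
    · exact Or.inl hv
    · simp only [Set.mem_iUnion, Set.mem_setOf_eq] at hv
      obtain ⟨i, hi⟩ := hv
      rcases hwAclean i with h | ⟨_, hall⟩
      · exact Or.inr ⟨i, hi, h⟩
      · exact Or.inl ((hall v hi) ▸ hPx i)
  have hYSchar : ∀ v ∈ YS, v ∈ Y ∨
      ∃ i, v ∈ (wB i).support ∧ ∀ u ∈ (wB i).support, R ≤ G.dist u (sv i) := by
    intro v hv
    rw [hYSdef, Set.mem_union] at hv
    rcases hv with hv | hv
    · exact Or.inl hv
    · simp only [Set.mem_iUnion, Set.mem_setOf_eq] at hv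
      obtain ⟨i, hi⟩ := hv
      rcases hwBclean i with h | ⟨_, hall⟩
      · exact Or.inr ⟨i, hi, h⟩
      · exact Or.inl ((hall v hi) ▸ hPy i)
  have hwAk : ∀ i, (∀ u ∈ (wA i).support, R ≤ G.dist u (sv i)) →
      ∀ v ∈ (wA i).support, ∀ k, R ≤ G.dist v (sv k) := by
    intro i hcl v hv k
    by_cases hk : k = i
    · subst hk; exact hcl v hv
    · exact le_trans (by omega) (hPcl i v (hwAsub i v hv) k hk)
  have hwBk : ∀ i, (∀ u ∈ (wB i).support, R ≤ G.dist u (sv i)) →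
      ∀ v ∈ (wB i).support, ∀ k, R ≤ G.dist v (sv k) := by
    intro i hcl v hv k
    by_cases hk : k = i
    · subst hk; exact hcl v hv
    · exact le_trans (by omega) (hPcl i v (hwBsub i v hv) k hk)
  have gammaCleanR : ∀ {v v' : V} (γ : G.Walk v v'), γ.length < M →
      (∀ k, R ≤ G.dist v' (sv k)) → ∀ u ∈ γ.support, ∀ t ∈ S, m ≤ G.dist u t := by
    intro v v' γ hlen hcl u hu t ht
    obtain ⟨k, rfl⟩ := hsv_surj t ht
    have h1 : G.dist u v' ≤ γ.length := dist_end_le_of_mem γ hu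
    have h2 : R ≤ G.dist v' (sv k) := hcl k
    have h3 : G.dist v' (sv k) ≤ G.dist v' u + G.dist u (sv k) := hG.dist_triangle
    have h4 : G.dist v' u = G.dist u v' := SimpleGraph.dist_comm
    omega
  have gammaCleanL : ∀ {v v' : V} (γ : G.Walk v v'), γ.length < M →
      (∀ k, R ≤ G.dist v (sv k)) → ∀ u ∈ γ.support, ∀ t ∈ S, m ≤ G.dist u t := by
    intro v v' γ hlen hcl u hu t ht
    obtain ⟨k, rfl⟩ := hsv_surj t ht
    have h1 : G.dist v u ≤ γ.length := dist_start_le_of_mem γ hu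
    have h2 : R ≤ G.dist v (sv k) := hcl k
    have h3 : G.dist v (sv k) ≤ G.dist v u + G.dist u (sv k) := hG.dist_triangle
    omega
  have poles : MDisjoint G M XS YS := by
    intro v hv v' hv'
    by_contra hcon
    push_neg at hcon
    obtain ⟨γ, hγ⟩ := hG.exists_walk_length_eq_dist v v'
    have hγlen : γ.length < M := by rw [hγ]; exact hcon
    rcases hXSchar v hv with hvX | ⟨i, hvi, hclA⟩
    · rcases hYSchar v' hv' with hvY | ⟨j, hvj, hclB⟩
      · have := hXY v hvX v' hvY
        omega
      · refine key v (yy j) (γ.append ((wB j).dropUntil v' hvj)) hvX (hPy j) ?_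
        intro u hu t ht
        rw [Walk.support_append] at hu
        rcases List.mem_append.mp hu with h | h
        · exact gammaCleanR γ hγlen (hwBk j hclB v' hvj) u h t ht
        · have h2 := Walk.support_dropUntil_subset (wB j) hvj (List.mem_of_mem_tail h)
          obtain ⟨k, rfl⟩ := hsv_surj t ht
          exact le_trans (by omega) (hwBk j hclB u h2 k)
    · rcases hYSchar v' hv' with hvY | ⟨j, hvj, hclB⟩
      · have hvrev : v ∈ (wA i).reverse.support := by
          rw [Walk.support_reverse, List.mem_reverse]; exact hvi
        refine key (xx i) v' (((wA i).reverse.takeUntil v hvrev).append γ) (hPx i) hvY ?_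
        intro u hu t ht
        rw [Walk.support_append] at hu
        rcases List.mem_append.mp hu with h | h
        · have h2 : u ∈ (wA i).support := by
            have h3 := Walk.support_takeUntil_subset _ hvrev h
            rw [Walk.support_reverse, List.mem_reverse] at h3; exact h3
          obtain ⟨k, rfl⟩ := hsv_surj t ht
          exact le_trans (by omega) (hwAk i hclA u h2 k)
        · exact gammaCleanL γ hγlen (hwAk i hclA v hvi) u (List.mem_of_mem_tail h) t ht
      · have hvrev : v ∈ (wA i).reverse.support := by
          rw [Walk.support_reverse, List.mem_reverse]; exact hvi
        refine key (xx i) (yy j)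
          (((wA i).reverse.takeUntil v hvrev).append (γ.append ((wB j).dropUntil v' hvj)))
          (hPx i) (hPy j) ?_
        intro u hu t ht
        rw [Walk.support_append] at hu
        rcases List.mem_append.mp hu with h | h
        · have h2 : u ∈ (wA i).support := by
            have h3 := Walk.support_takeUntil_subset _ hvrev h
            rw [Walk.support_reverse, List.mem_reverse] at h3; exact h3
          obtain ⟨k, rfl⟩ := hsv_surj t ht
          exact le_trans (by omega) (hwAk i hclA u h2 k)
        · have h' := List.mem_of_mem_tail h
          rw [Walk.support_append] at h'
          rcases List.mem_append.mp h' with h2 | h2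
          · exact gammaCleanL γ hγlen (hwAk i hclA v hvi) u h2 t ht
          · have h3 := Walk.support_dropUntil_subset (wB j) hvj (List.mem_of_mem_tail h2)
            obtain ⟨k, rfl⟩ := hsv_surj t ht
            exact le_trans (by omega) (hwBk j hclB u h3 k)
  have hdisj : Disjoint XS YS := by
    rw [Set.disjoint_left]
    intro v hvX hvY
    have h := poles v hvX v hvY
    rw [SimpleGraph.dist_self] at h
    omega
  have hconnX : ConnSet G XS := by
    rw [ConnSet, SimpleGraph.connected_iff]
    constructor
    · have toX : ∀ (z : V) (hz : z ∈ XS), ∃ (x0 : V) (hx0 : x0 ∈ X),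
          (G.induce XS).Reachable ⟨z, hz⟩ ⟨x0, Or.inl hx0⟩ := by
        intro z hz
        have hz' := hz
        rw [hXSdef, Set.mem_union] at hz'
        rcases hz' with h | h
        · exact ⟨z, h, Reachable.refl _⟩
        · simp only [Set.mem_iUnion, Set.mem_setOf_eq] at h
          obtain ⟨i, hi⟩ := h
          refine ⟨xx i, hPx i, ?_⟩
          have hsub : ∀ w ∈ ((wA i).dropUntil z hi).support, w ∈ XS := by
            intro w hw
            exact Or.inr (Set.mem_iUnion.2 ⟨i, Walk.support_dropUntil_subset _ hi hw⟩)
          exact reachable_induce ((wA i).dropUntil z hi) hsub _ _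
      have XtoX : ∀ (x0 x1 : V) (h0 : x0 ∈ X) (h1 : x1 ∈ X),
          (G.induce XS).Reachable ⟨x0, Or.inl h0⟩ ⟨x1, Or.inl h1⟩ := by
        intro x0 x1 h0 h1
        have hr : (G.induce X).Reachable ⟨x0, h0⟩ ⟨x1, h1⟩ := hXc.preconnected _ _
        obtain ⟨p, hp⟩ := walk_out h0 h1 hr
        exact reachable_induce p (fun w hw => Or.inl (hp w hw)) _ _
      rintro ⟨u, hu⟩ ⟨w, hw⟩
      obtain ⟨x0, hx0, hr0⟩ := toX u hu
      obtain ⟨x1, hx1, hr1⟩ := toX w hw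
      exact hr0.trans ((XtoX x0 x1 hx0 hx1).trans hr1.symm)
    · obtain ⟨⟨z, hz⟩⟩ := hXc.nonempty
      exact ⟨⟨z, Or.inl hz⟩⟩
  have hconnY : ConnSet G YS := by
    rw [ConnSet, SimpleGraph.connected_iff]
    constructor
    · have toY : ∀ (z : V) (hz : z ∈ YS), ∃ (y0 : V) (hy0 : y0 ∈ Y),
          (G.induce YS).Reachable ⟨z, hz⟩ ⟨y0, Or.inl hy0⟩ := by
        intro z hz
        have hz' := hz
        rw [hYSdef, Set.mem_union] at hz'
        rcases hz' with h | h
        · exact ⟨z, h, Reachable.refl _⟩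
        · simp only [Set.mem_iUnion, Set.mem_setOf_eq] at h
          obtain ⟨i, hi⟩ := h
          refine ⟨yy i, hPy i, ?_⟩
          have hsub : ∀ w ∈ ((wB i).dropUntil z hi).support, w ∈ YS := by
            intro w hw
            exact Or.inr (Set.mem_iUnion.2 ⟨i, Walk.support_dropUntil_subset _ hi hw⟩)
          exact reachable_induce ((wB i).dropUntil z hi) hsub _ _
      have YtoY : ∀ (y0 y1 : V) (h0 : y0 ∈ Y) (h1 : y1 ∈ Y),
          (G.induce YS).Reachable ⟨y0, Or.inl h0⟩ ⟨y1, Or.inl h1⟩ := by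
        intro y0 y1 h0 h1
        have hr : (G.induce Y).Reachable ⟨y0, h0⟩ ⟨y1, h1⟩ := hYc.preconnected _ _
        obtain ⟨p, hp⟩ := walk_out h0 h1 hr
        exact reachable_induce p (fun w hw => Or.inl (hp w hw)) _ _
      rintro ⟨u, hu⟩ ⟨w, hw⟩
      obtain ⟨y0, hy0, hr0⟩ := toY u hu
      obtain ⟨y1, hy1, hr1⟩ := toY w hw
      exact hr0.trans ((YtoY y0 y1 hy0 hy1).trans hr1.symm)
    · obtain ⟨⟨z, hz⟩⟩ := hYc.nonempty
      exact ⟨⟨z, Or.inl hz⟩⟩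
  refine ⟨⟨⟨XS, YS, hdisj, hconnX, hconnY, A, B, ?_, ?_, rg, hrgPath, ?_⟩, poles, ?_⟩⟩
  · intro i
    exact Or.inr (Set.mem_iUnion.2 ⟨i, (wA i).start_mem_support⟩)
  · intro i
    exact Or.inr (Set.mem_iUnion.2 ⟨i, (wB i).start_mem_support⟩)
  · intro i j hij u hui huj
    exfalso
    have h1 := hrgBall i u hui
    have h2 := hrgBall j u huj
    have hsp := spread i j hij
    have t1 : G.dist (sv i) (sv j) ≤ G.dist (sv i) u + G.dist u (sv j) := hG.dist_triangle
    have c1 : G.dist (sv i) u = G.dist u (sv i) := SimpleGraph.dist_comm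
    omega
  · intro i j hij u v hu hv
    have h1 := hrgBall i u hu
    have h2 := hrgBall j v hv
    have hsp := spread i j hij
    have t1 : G.dist (sv i) (sv j) ≤ G.dist (sv i) u + G.dist u (sv j) := hG.dist_triangle
    have t2 : G.dist u (sv j) ≤ G.dist u v + G.dist v (sv j) := hG.dist_triangle
    have c1 : G.dist (sv i) u = G.dist u (sv i) := SimpleGraph.dist_comm
    omega

end CMAux

/-- Coarse Menger-type theorem: if a connected graph `G` is `m`-fat
`(n+1)`-bottlenecked but not coarsely `n`-bottlenecked, then for every `M` the
graph contains an `M`-fat `(n+1)`-ladder, i.e. `D_{n+1}` as an asymptotic minor. -/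
theorem coarseMengerType (G : SimpleGraph V) (hG : G.Connected) (m n : ℕ)
    (h₁ : FatBottlenecked G m (n + 1)) (h₂ : ¬ ∃ M, FatBottlenecked G M n) :
    ∀ M, Nonempty (FatLadder G M (n + 1)) := by
  intro M
  obtain ⟨L⟩ := CMAux.main_aux G hG m n h₁ h₂ (M+1) (by omega)
  exact ⟨CMAux.FatLadder.weaken L⟩
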